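/- Let K ≥ 1, N ≥ 1 and let h_{k,i} ∈ ℝ^p for k = 1,…,K and i = 1,…,N be feature vectors. Define the mean-squared-error linear probing loss L(W,b) = (1/(2KN))·∑_{k=1}^K ∑_{i=1}^N ‖W h_{k,i} + b − e_k‖² over W ∈ ℝ^{K×p} and b ∈ ℝ^K, where e_k is the k-th standard basis vector of ℝ^K. Then the infimum of L over all (W,b) is attained and equals −(1/(2K))·Tr[Σ_T† Σ_B] + 1/2 − 1/(2K). -/
import Mathlib


open Matrix Finset

noncomputable section

/-- The `k`-th class mean `μ_k = (1/N) ∑_i h_{k,i}`. -/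
def classMean {K N p : ℕ} (H : Fin K → Fin N → (Fin p → ℝ)) (k : Fin K) : Fin p → ℝ :=
  (N : ℝ)⁻¹ • ∑ i, H k i

/-- The global mean `μ_G = (1/(KN)) ∑_{k,i} h_{k,i}`. -/
def globalMean {K N p : ℕ} (H : Fin K → Fin N → (Fin p → ℝ)) : Fin p → ℝ :=
  ((K : ℝ) * (N : ℝ))⁻¹ • ∑ k, ∑ i, H k i

/-- Within-class covariance `Σ_W = (1/(KN)) ∑_{k,i} (h_{k,i} − μ_k)(h_{k,i} − μ_k)ᵀ`. -/
def SigmaW {K N p : ℕ} (H : Fin K → Fin N → (Fin p → ℝ)) : Matrix (Fin p) (Fin p) ℝ :=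
  ((K : ℝ) * (N : ℝ))⁻¹ •
    ∑ k, ∑ i, vecMulVec (H k i - classMean H k) (H k i - classMean H k)

/-- Between-class covariance `Σ_B = (1/K) ∑_k (μ_k − μ_G)(μ_k − μ_G)ᵀ`. -/
def SigmaB {K N p : ℕ} (H : Fin K → Fin N → (Fin p → ℝ)) : Matrix (Fin p) (Fin p) ℝ :=
  (K : ℝ)⁻¹ • ∑ k, vecMulVec (classMean H k - globalMean H) (classMean H k - globalMean H)

/-- Overall covariance `Σ_T = (1/(KN)) ∑_{k,i} (h_{k,i} − μ_G)(h_{k,i} − μ_G)ᵀ`. -/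
def SigmaT {K N p : ℕ} (H : Fin K → Fin N → (Fin p → ℝ)) : Matrix (Fin p) (Fin p) ℝ :=
  ((K : ℝ) * (N : ℝ))⁻¹ •
    ∑ k, ∑ i, vecMulVec (H k i - globalMean H) (H k i - globalMean H)
/-- `Ad` is the Moore–Penrose pseudoinverse of `A`: the four Penrose conditions. -/
def IsMoorePenrose {p : ℕ} (A Ad : Matrix (Fin p) (Fin p) ℝ) : Prop :=
  A * Ad * A = A ∧ Ad * A * Ad = Ad ∧ (A * Ad)ᵀ = A * Ad ∧ (Ad * A)ᵀ = Ad * A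

/-- MSE linear probing loss `L(W,b) = (1/(2KN)) ∑_{k,i} ‖W h_{k,i} + b − e_k‖²`. -/
def mseLoss {K N p : ℕ} (H : Fin K → Fin N → (Fin p → ℝ))
    (W : Matrix (Fin K) (Fin p) ℝ) (b : Fin K → ℝ) : ℝ :=
  (2 * (K : ℝ) * (N : ℝ))⁻¹ *
    ∑ k, ∑ i, ∑ j, ((W.mulVec (H k i) + b - Pi.single k 1 : Fin K → ℝ) j) ^ 2

/-! ### Auxiliary definitions -/

/-- centered feature vectors -/
def cvec {K N p : ℕ} (H : Fin K → Fin N → (Fin p → ℝ)) (k : Fin K) (i : Fin N) : Fin p → ℝ :=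
  H k i - globalMean H

/-- centered class means -/
def mvec {K N p : ℕ} (H : Fin K → Fin N → (Fin p → ℝ)) (k : Fin K) : Fin p → ℝ :=
  classMean H k - globalMean H

/-- optimal rows -/
def uvec {K N p : ℕ} (H : Fin K → Fin N → (Fin p → ℝ)) (STd : Matrix (Fin p) (Fin p) ℝ)
    (j : Fin K) : Fin p → ℝ :=
  (K : ℝ)⁻¹ • (STd *ᵥ mvec H j)

/-! ### Small helper lemmas -/

lemma dotp_sum {p : ℕ} {ι : Type*} (s : Finset ι) (u : Fin p → ℝ) (f : ι → Fin p → ℝ) :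
    u ⬝ᵥ (∑ i ∈ s, f i) = ∑ i ∈ s, u ⬝ᵥ f i := by
  simp only [dotProduct, Finset.sum_apply, Finset.mul_sum]
  exact Finset.sum_comm

lemma dotp_sum2 {p K N : ℕ} (u : Fin p → ℝ) (f : Fin K → Fin N → Fin p → ℝ) :
    u ⬝ᵥ (∑ k, ∑ i, f k i) = ∑ k, ∑ i, u ⬝ᵥ f k i := by
  rw [dotp_sum]
  exact Finset.sum_congr rfl fun k _ => dotp_sum _ _ _

lemma dotp_smul' {p : ℕ} (u v : Fin p → ℝ) (c : ℝ) : u ⬝ᵥ (c • v) = c * (u ⬝ᵥ v) := by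
  rw [dotProduct_smul]; rfl

lemma vmv_mulVec {p : ℕ} (a b v : Fin p → ℝ) : (vecMulVec a b) *ᵥ v = (b ⬝ᵥ v) • a := by
  ext j
  simp only [mulVec, vecMulVec_apply, dotProduct, Pi.smul_apply, smul_eq_mul, Finset.sum_mul]
  exact Finset.sum_congr rfl fun c _ => by ring

lemma trace_mul_vmv {p : ℕ} (M : Matrix (Fin p) (Fin p) ℝ) (a : Fin p → ℝ) :
    (M * vecMulVec a a).trace = (M *ᵥ a) ⬝ᵥ a := by
  simp only [Matrix.trace, Matrix.diag, Matrix.mul_apply, vecMulVec_apply, mulVec, dotProduct,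
    Finset.sum_mul]
  exact Finset.sum_congr rfl fun c _ => Finset.sum_congr rfl fun b _ => by ring

lemma mysum_mulVec {p : ℕ} {ι : Type*} (s : Finset ι) (f : ι → Matrix (Fin p) (Fin p) ℝ)
    (v : Fin p → ℝ) : (∑ i ∈ s, f i) *ᵥ v = ∑ i ∈ s, (f i) *ᵥ v := by
  ext j
  simp only [mulVec, dotProduct, Finset.sum_apply, Matrix.sum_apply, Finset.sum_mul]
  exact Finset.sum_comm

lemma mymulVec_sum {p : ℕ} {ι : Type*} (s : Finset ι) (M : Matrix (Fin p) (Fin p) ℝ)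
    (f : ι → Fin p → ℝ) : M *ᵥ (∑ i ∈ s, f i) = ∑ i ∈ s, M *ᵥ f i := by
  ext j
  simp only [mulVec, dotProduct, Finset.sum_apply, Finset.mul_sum]
  exact Finset.sum_comm

lemma sq_sum_helper {N : ℕ} (A E : Fin N → ℝ) (c : ℝ) :
    ∑ i, (A i + E i + c)^2
      = (∑ i, (A i)^2) + (∑ i, ((E i)^2 + 2*(A i * E i)))
        + 2*c*(∑ i, (A i + E i)) + (N:ℝ)*c^2 := by
  have h : ∀ i, (A i + E i + c)^2
      = (A i)^2 + ((E i)^2 + 2*(A i * E i)) + (2*c*(A i + E i) + c^2) := fun i => by ring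
  simp only [h, Finset.sum_add_distrib, Finset.sum_const, card_univ, Fintype.card_fin,
    nsmul_eq_mul, ← Finset.mul_sum]
  ring

/-! ### The row-wise sum expansion -/

lemma rowSum {K N p : ℕ} (x : Fin K → Fin N → (Fin p → ℝ)) (m : Fin K → Fin p → ℝ)
    (v w u : Fin p → ℝ) (β : ℝ) (y : Fin K → ℝ)
    (hxm : ∀ k, ∑ i, x k i = (N:ℝ) • m k)
    (hm0 : ∑ k, m k = 0)
    (hu : ∑ k, ∑ i, ((x k i) ⬝ᵥ u) • x k i = (N:ℝ) • v)
    (hym : ∑ k, y k • m k = v) :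
    ∑ k, ∑ i, (w ⬝ᵥ x k i + β - y k)^2
      = (∑ k, ∑ i, ((w - u) ⬝ᵥ x k i)^2) + (N:ℝ) * (∑ k, (β - y k)^2)
        - (N:ℝ) * (u ⬝ᵥ v) := by
  have stage : ∑ k, ∑ i, (w ⬝ᵥ x k i + β - y k)^2
      = ∑ k, ((∑ i, ((w - u) ⬝ᵥ x k i)^2)
          + (∑ i, ((u ⬝ᵥ x k i)^2 + 2*(((w - u) ⬝ᵥ x k i) * (u ⬝ᵥ x k i))))
          + 2*(β - y k)*(∑ i, (((w - u) ⬝ᵥ x k i) + (u ⬝ᵥ x k i)))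
          + (N:ℝ)*(β - y k)^2) := by
    refine Finset.sum_congr rfl fun k _ => ?_
    have h1 : ∀ i, w ⬝ᵥ x k i + β - y k
        = ((w - u) ⬝ᵥ x k i) + (u ⬝ᵥ x k i) + (β - y k) := by
      intro i; rw [sub_dotProduct]; ring
    simp only [h1]
    exact sq_sum_helper _ _ _
  rw [stage, Finset.sum_add_distrib, Finset.sum_add_distrib, Finset.sum_add_distrib]
  have hP2 : ∑ k, ∑ i, ((u ⬝ᵥ x k i)^2 + 2*(((w - u) ⬝ᵥ x k i) * (u ⬝ᵥ x k i)))
      = (N:ℝ) * ((u ⬝ᵥ v) + 2*((w ⬝ᵥ v) - (u ⬝ᵥ v))) := by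
    have hterm : ∀ k i, (u ⬝ᵥ x k i)^2 + 2*(((w - u) ⬝ᵥ x k i) * (u ⬝ᵥ x k i))
        = (u + (2:ℝ) • (w - u)) ⬝ᵥ (((x k i) ⬝ᵥ u) • x k i) := by
      intro k i
      rw [dotp_smul', add_dotProduct, smul_dotProduct, sub_dotProduct,
        dotProduct_comm (x k i) u, smul_eq_mul]
      try ring
    simp only [hterm]
    rw [← dotp_sum2, hu, dotp_smul', add_dotProduct, smul_dotProduct, sub_dotProduct,
      smul_eq_mul]
    try ring
  have hP3 : ∑ k, 2*(β - y k)*(∑ i, (((w - u) ⬝ᵥ x k i) + (u ⬝ᵥ x k i)))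
      = -2 * (N:ℝ) * (w ⬝ᵥ v) := by
    have hterm : ∀ k, 2*(β - y k)*(∑ i, (((w - u) ⬝ᵥ x k i) + (u ⬝ᵥ x k i)))
        = 2*(N:ℝ)*β*(w ⬝ᵥ m k) - 2*(N:ℝ)*(y k * (w ⬝ᵥ m k)) := by
      intro k
      have : ∑ i, (((w - u) ⬝ᵥ x k i) + (u ⬝ᵥ x k i)) = (N:ℝ) * (w ⬝ᵥ m k) := by
        have h2 : ∀ i, ((w - u) ⬝ᵥ x k i) + (u ⬝ᵥ x k i) = w ⬝ᵥ x k i := by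
          intro i; rw [sub_dotProduct]; ring
        simp only [h2]
        rw [← dotp_sum, hxm k, dotp_smul']
      rw [this]; ring
    simp only [hterm, Finset.sum_sub_distrib, ← Finset.mul_sum]
    have e1 : ∑ k, (w ⬝ᵥ m k) = 0 := by
      rw [← dotp_sum, hm0, dotProduct_zero]
    have e2 : ∑ k, y k * (w ⬝ᵥ m k) = w ⬝ᵥ v := by
      rw [← hym, dotp_sum]
      exact Finset.sum_congr rfl fun k _ => (dotp_smul' _ _ _).symm
    rw [e1, e2]; ring
  rw [hP2, hP3, ← Finset.mul_sum]
  ring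

/-! ### The projection property of the pseudoinverse -/

lemma key_proj {K N p : ℕ} (hK : 1 ≤ K) (hN : 1 ≤ N) (H : Fin K → Fin N → (Fin p → ℝ))
    (STd : Matrix (Fin p) (Fin p) ℝ) (hSTd : IsMoorePenrose (SigmaT H) STd) (k : Fin K)
    (i : Fin N) :
    (SigmaT H * STd) *ᵥ (H k i - globalMean H) = H k i - globalMean H := by
  obtain ⟨h1, h2, h3, h4⟩ := hSTd
  set A := SigmaT H with hA
  set x : Fin K → Fin N → Fin p → ℝ := fun k i => H k i - globalMean H with hx
  set Q : Matrix (Fin p) (Fin p) ℝ := 1 - A * STd with hQ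
  have hKN : ((K : ℝ) * (N : ℝ)) ≠ 0 := by
    have h5 : (K:ℝ) ≠ 0 := Nat.cast_ne_zero.mpr (by omega)
    have h6 : (N:ℝ) ≠ 0 := Nat.cast_ne_zero.mpr (by omega)
    exact mul_ne_zero h5 h6
  have hQsym : Qᵀ = Q := by rw [hQ, transpose_sub, transpose_one, h3]
  have hQA : Q * A = 0 := by rw [hQ, sub_mul, one_mul, h1, sub_self]
  have hQQ : Q * Q = Q := by
    have hP : (A * STd) * (A * STd) = A * STd := by rw [← mul_assoc, h1]
    rw [hQ, sub_mul, one_mul, mul_sub, mul_one, hP]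
    abel
  have hterm : ∀ k i, (Q *ᵥ x k i) ⬝ᵥ (x k i) = (Q *ᵥ x k i) ⬝ᵥ (Q *ᵥ x k i) := by
    intro k i
    conv_rhs => rw [dotProduct_mulVec, ← mulVec_transpose, hQsym, mulVec_mulVec, hQQ]
  have e1 : (0 : ℝ) = ((K:ℝ)*(N:ℝ))⁻¹ * ∑ k, ∑ i, ((Q *ᵥ x k i) ⬝ᵥ (Q *ᵥ x k i)) := by
    have h0 : (Q * A).trace = 0 := by rw [hQA, trace_zero]
    rw [← h0, hA]
    show (Q * (((K : ℝ) * (N : ℝ))⁻¹ • ∑ k, ∑ i, vecMulVec (x k i) (x k i))).trace = _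
    rw [Matrix.mul_smul, trace_smul]
    congr 1
    rw [Finset.mul_sum, trace_sum]
    refine Finset.sum_congr rfl fun k _ => ?_
    rw [Finset.mul_sum, trace_sum]
    exact Finset.sum_congr rfl fun i _ => by rw [trace_mul_vmv, ← hterm]
  have hnn : ∀ (v : Fin p → ℝ), (0:ℝ) ≤ v ⬝ᵥ v :=
    fun v => Finset.sum_nonneg fun _ _ => mul_self_nonneg _
  have hzero : (Q *ᵥ x k i) ⬝ᵥ (Q *ᵥ x k i) = 0 := by
    have hsum : ∑ k, ∑ i, ((Q *ᵥ x k i) ⬝ᵥ (Q *ᵥ x k i)) = 0 := by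
      rcases mul_eq_zero.mp e1.symm with h | h
      · exact absurd h (inv_ne_zero hKN)
      · exact h
    have h1' : ∀ k ∈ (univ : Finset (Fin K)), ∑ i, ((Q *ᵥ x k i) ⬝ᵥ (Q *ᵥ x k i)) = 0 :=
      (Finset.sum_eq_zero_iff_of_nonneg (fun k _ => Finset.sum_nonneg fun i _ => hnn _)).mp hsum
    exact (Finset.sum_eq_zero_iff_of_nonneg (fun i _ => hnn _)).mp (h1' k (mem_univ k)) i
      (mem_univ i)
  have hQx : Q *ᵥ x k i = 0 := dotProduct_self_eq_zero.mp hzero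
  have h7 : x k i - (A * STd) *ᵥ x k i = 0 := by
    rw [← hQx, hQ, sub_mulVec, one_mulVec]
  exact (sub_eq_zero.mp h7).symm

lemma fact_hxm {K N p : ℕ} (hN : 1 ≤ N) (H : Fin K → Fin N → (Fin p → ℝ)) (k : Fin K) :
    ∑ i, cvec H k i = (N:ℝ) • mvec H k := by
  have hNne : (N:ℝ) ≠ 0 := Nat.cast_ne_zero.mpr (by omega)
  unfold cvec mvec
  rw [Finset.sum_sub_distrib, Finset.sum_const, card_univ, Fintype.card_fin, smul_sub]
  congr 1
  · rw [classMean, smul_smul, mul_inv_cancel₀ hNne, one_smul]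
  · exact (Nat.cast_smul_eq_nsmul ℝ N (globalMean H)).symm

lemma fact_hm0 {K N p : ℕ} (hK : 1 ≤ K) (hN : 1 ≤ N) (H : Fin K → Fin N → (Fin p → ℝ)) :
    ∑ k, mvec H k = 0 := by
  have hKne : (K:ℝ) ≠ 0 := Nat.cast_ne_zero.mpr (by omega)
  have hNne : (N:ℝ) ≠ 0 := Nat.cast_ne_zero.mpr (by omega)
  unfold mvec
  rw [Finset.sum_sub_distrib, Finset.sum_const, card_univ, Fintype.card_fin, sub_eq_zero]
  rw [← Nat.cast_smul_eq_nsmul ℝ K (globalMean H), globalMean, smul_smul]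
  rw [show ((K:ℝ) * ((K:ℝ)*(N:ℝ))⁻¹) = (N:ℝ)⁻¹ by field_simp]
  simp only [classMean, ← Finset.smul_sum]

lemma fact_hAv {K N p : ℕ} (hK : 1 ≤ K) (hN : 1 ≤ N) (H : Fin K → Fin N → (Fin p → ℝ))
    (v : Fin p → ℝ) :
    ∑ k, ∑ i, ((cvec H k i) ⬝ᵥ v) • cvec H k i = ((K:ℝ)*(N:ℝ)) • ((SigmaT H) *ᵥ v) := by
  have hKN : ((K:ℝ)*(N:ℝ)) ≠ 0 :=
    mul_ne_zero (Nat.cast_ne_zero.mpr (by omega)) (Nat.cast_ne_zero.mpr (by omega))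
  have h : (SigmaT H) *ᵥ v = ((K:ℝ)*(N:ℝ))⁻¹ • ∑ k, ∑ i, ((cvec H k i) ⬝ᵥ v) • cvec H k i := by
    rw [SigmaT, smul_mulVec, mysum_mulVec]
    congr 1
    refine Finset.sum_congr rfl fun k _ => ?_
    rw [mysum_mulVec]
    exact Finset.sum_congr rfl fun i _ => vmv_mulVec _ _ _
  rw [h, smul_smul, mul_inv_cancel₀ hKN, one_smul]

lemma fact_proj {K N p : ℕ} (hK : 1 ≤ K) (hN : 1 ≤ N) (H : Fin K → Fin N → (Fin p → ℝ))
    (STd : Matrix (Fin p) (Fin p) ℝ) (hSTd : IsMoorePenrose (SigmaT H) STd) (j : Fin K) :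
    (SigmaT H * STd) *ᵥ (mvec H j) = mvec H j := by
  have hNne : (N:ℝ) ≠ 0 := Nat.cast_ne_zero.mpr (by omega)
  have hmv : mvec H j = (N:ℝ)⁻¹ • ∑ i, cvec H j i := by
    rw [fact_hxm hN H j, smul_smul, inv_mul_cancel₀ hNne, one_smul]
  rw [hmv, mulVec_smul, mymulVec_sum]
  congr 1
  exact Finset.sum_congr rfl fun i _ => key_proj hK hN H STd hSTd j i

lemma fact_hu {K N p : ℕ} (hK : 1 ≤ K) (hN : 1 ≤ N) (H : Fin K → Fin N → (Fin p → ℝ))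
    (STd : Matrix (Fin p) (Fin p) ℝ) (hSTd : IsMoorePenrose (SigmaT H) STd) (j : Fin K) :
    ∑ k, ∑ i, ((cvec H k i) ⬝ᵥ uvec H STd j) • cvec H k i = (N:ℝ) • mvec H j := by
  have hKne : (K:ℝ) ≠ 0 := Nat.cast_ne_zero.mpr (by omega)
  rw [fact_hAv hK hN H]
  have h1 : (SigmaT H) *ᵥ (uvec H STd j) = (K:ℝ)⁻¹ • mvec H j := by
    show (SigmaT H) *ᵥ ((K : ℝ)⁻¹ • (STd *ᵥ mvec H j)) = _
    rw [mulVec_smul, mulVec_mulVec, fact_proj hK hN H STd hSTd j]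
  rw [h1, smul_smul, show ((K:ℝ)*(N:ℝ)) * (K:ℝ)⁻¹ = (N:ℝ) by field_simp]

lemma fact_hym {K N p : ℕ} (H : Fin K → Fin N → (Fin p → ℝ)) (j : Fin K) :
    ∑ k, ((Pi.single k 1 : Fin K → ℝ) j) • mvec H k = mvec H j := by
  have h : ∀ k : Fin K, ((Pi.single k 1 : Fin K → ℝ) j) • mvec H k
      = if j = k then mvec H k else 0 := by
    intro k
    rw [Pi.single_apply]
    split <;> simp
  simp only [h, Finset.sum_ite_eq, mem_univ, if_true]

lemma fact_hbq {K : ℕ} (hK : 1 ≤ K) (c : ℝ) (j : Fin K) :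
    ∑ k, (c - (Pi.single k 1 : Fin K → ℝ) j)^2 = (K:ℝ)*(c - (K:ℝ)⁻¹)^2 + (1 - (K:ℝ)⁻¹) := by
  have hKne : (K:ℝ) ≠ 0 := Nat.cast_ne_zero.mpr (by omega)
  have ht : ∀ k : Fin K, (c - (Pi.single k 1 : Fin K → ℝ) j)^2
      = c^2 - (2*c - 1)*(if j = k then (1:ℝ) else 0) := by
    intro k
    rw [Pi.single_apply]
    split <;> ring
  simp only [ht, Finset.sum_sub_distrib, Finset.sum_const, card_univ, Fintype.card_fin,
    nsmul_eq_mul, ← Finset.mul_sum, Finset.sum_ite_eq, mem_univ, if_true]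
  field_simp
  ring

lemma master {K N p : ℕ} (hK : 1 ≤ K) (hN : 1 ≤ N) (H : Fin K → Fin N → (Fin p → ℝ))
    (STd : Matrix (Fin p) (Fin p) ℝ) (hSTd : IsMoorePenrose (SigmaT H) STd)
    (W : Matrix (Fin K) (Fin p) ℝ) (b : Fin K → ℝ) :
    mseLoss H W b = (2 * (K:ℝ) * (N:ℝ))⁻¹ *
      ∑ j, ((∑ k, ∑ i, ((W j - uvec H STd j) ⬝ᵥ cvec H k i)^2)
        + (N:ℝ) * ((K:ℝ)*((b j + W j ⬝ᵥ globalMean H) - (K:ℝ)⁻¹)^2 + (1 - (K:ℝ)⁻¹))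
        - (N:ℝ) * (uvec H STd j ⬝ᵥ mvec H j)) := by
  rw [mseLoss]
  congr 1
  have happ : ∀ (k : Fin K) (i : Fin N) (j : Fin K),
      ((W.mulVec (H k i) + b - Pi.single k 1 : Fin K → ℝ) j)
        = W j ⬝ᵥ cvec H k i + (b j + W j ⬝ᵥ globalMean H)
            - (Pi.single k 1 : Fin K → ℝ) j := by
    intro k i j
    have h1 : (W.mulVec (H k i)) j = W j ⬝ᵥ H k i := rfl
    have h2 : W j ⬝ᵥ H k i = W j ⬝ᵥ cvec H k i + W j ⬝ᵥ globalMean H := by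
      rw [show cvec H k i = H k i - globalMean H from rfl, dotProduct_sub]
      ring
    simp only [Pi.add_apply, Pi.sub_apply, h1, h2]
    ring
  simp only [happ]
  have hswap : ∀ g : Fin K → Fin N → Fin K → ℝ,
      ∑ k, ∑ i, ∑ j, g k i j = ∑ j, ∑ k, ∑ i, g k i j := by
    intro g
    have h1 : ∀ k, ∑ i, ∑ j, g k i j = ∑ j, ∑ i, g k i j := fun k => Finset.sum_comm
    simp only [h1]
    exact Finset.sum_comm
  rw [hswap]
  refine Finset.sum_congr rfl fun j _ => ?_
  rw [rowSum (cvec H) (mvec H) (mvec H j) (W j) (uvec H STd j) (b j + W j ⬝ᵥ globalMean H)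
      (fun k => (Pi.single k 1 : Fin K → ℝ) j) (fact_hxm hN H) (fact_hm0 hK hN H)
      (fact_hu hK hN H STd hSTd j) (fact_hym H j)]
  rw [fact_hbq hK]

/-- **Theorem 1 (optimal MSE linear probing loss).** For `K ≥ 1`, `N ≥ 1` and features
`h_{k,i} ∈ ℝ^p`, the infimum of the MSE linear probing loss is attained, and equals
`−(1/(2K))·Tr[Σ_T† Σ_B] + 1/2 − 1/(2K)`. -/
theorem optimal_mse_linear_probing_loss {K N p : ℕ} (hK : 1 ≤ K) (hN : 1 ≤ N)
    (H : Fin K → Fin N → (Fin p → ℝ))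
    (STd : Matrix (Fin p) (Fin p) ℝ) (hSTd : IsMoorePenrose (SigmaT H) STd) :
    ∃ (W : Matrix (Fin K) (Fin p) ℝ) (b : Fin K → ℝ),
      (∀ (W' : Matrix (Fin K) (Fin p) ℝ) (b' : Fin K → ℝ), mseLoss H W b ≤ mseLoss H W' b') ∧
      mseLoss H W b = -(2 * (K : ℝ))⁻¹ * (STd * SigmaB H).trace + 1 / 2 - (2 * (K : ℝ))⁻¹ := by
  have hKne : (K:ℝ) ≠ 0 := Nat.cast_ne_zero.mpr (by omega)
  have hNne : (N:ℝ) ≠ 0 := Nat.cast_ne_zero.mpr (by omega)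
  have hopt : mseLoss H (Matrix.of (uvec H STd))
      (fun j => (K:ℝ)⁻¹ - uvec H STd j ⬝ᵥ globalMean H)
      = (2 * (K:ℝ) * (N:ℝ))⁻¹ *
        ∑ j, ((N:ℝ) * (1 - (K:ℝ)⁻¹) - (N:ℝ) * (uvec H STd j ⬝ᵥ mvec H j)) := by
    rw [master hK hN H STd hSTd]
    congr 1
    refine Finset.sum_congr rfl fun j _ => ?_
    have h1 : (Matrix.of (uvec H STd)) j - uvec H STd j = 0 := sub_self _
    have h2 : (((K:ℝ)⁻¹ - uvec H STd j ⬝ᵥ globalMean H)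
        + (Matrix.of (uvec H STd)) j ⬝ᵥ globalMean H) - (K:ℝ)⁻¹ = 0 := by
      have h0 : (Matrix.of (uvec H STd)) j = uvec H STd j := rfl
      rw [h0]
      ring
    have hz : ∀ (k : Fin K) (i : Fin N),
        ((Matrix.of (uvec H STd) j - uvec H STd j) ⬝ᵥ cvec H k i)^2 = 0 := by
      intro k i
      rw [h1, zero_dotProduct]
      norm_num
    simp only [hz, Finset.sum_const_zero]
    rw [h2]
    ring
  refine ⟨Matrix.of (uvec H STd), fun j => (K:ℝ)⁻¹ - uvec H STd j ⬝ᵥ globalMean H, ?_, ?_⟩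
  · -- minimality
    intro W' b'
    rw [hopt, master hK hN H STd hSTd W' b']
    apply mul_le_mul_of_nonneg_left ?_ (by positivity)
    apply Finset.sum_le_sum
    intro j _
    have e1 : (0:ℝ) ≤ ∑ k, ∑ i, ((W' j - uvec H STd j) ⬝ᵥ cvec H k i)^2 :=
      Finset.sum_nonneg fun k _ => Finset.sum_nonneg fun i _ => sq_nonneg _
    have e2 : (0:ℝ) ≤ (K:ℝ)*((b' j + W' j ⬝ᵥ globalMean H) - (K:ℝ)⁻¹)^2 := by positivity
    have e3 : (0:ℝ) ≤ (N:ℝ) := by positivity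
    nlinarith
  · -- value
    rw [hopt]
    have htr : (STd * SigmaB H).trace
        = (K:ℝ)⁻¹ * ∑ j, ((STd *ᵥ mvec H j) ⬝ᵥ mvec H j) := by
      rw [SigmaB, Matrix.mul_smul, trace_smul, smul_eq_mul, Finset.mul_sum, trace_sum]
      congr 1
      exact Finset.sum_congr rfl fun k _ => trace_mul_vmv STd (mvec H k)
    have hdot : ∀ j, uvec H STd j ⬝ᵥ mvec H j
        = (K:ℝ)⁻¹ * ((STd *ᵥ mvec H j) ⬝ᵥ mvec H j) := by
      intro j
      rw [show uvec H STd j = (K:ℝ)⁻¹ • (STd *ᵥ mvec H j) from rfl, smul_dotProduct,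
        smul_eq_mul]
    rw [htr]
    simp only [hdot]
    rw [Finset.sum_sub_distrib, Finset.sum_const, card_univ, Fintype.card_fin, nsmul_eq_mul]
    simp only [← Finset.mul_sum]
    field_simp
    ring
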